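/- Value function difference via occupancy: for stationary policies π, π' on a finite discounted MDP, (1-γ)(J_μ^{π'} − J_μ^{π}) = ∑_s d_μ^{π'}(s) ∑_a π'(a|s) A^π(s,a), and by symmetry also equals −∑_s d_μ^{π}(s) ∑_a π(a|s) A^{π'}(s,a). -/

import Mathlib

/-- State distribution at time t under transition kernel `Ppi` from initial distribution `μ`. -/
noncomputable def stateDist {S : Type*} [Fintype S]
    (Ppi : S → S → ℝ) (μ : S → ℝ) : ℕ → S → ℝ
  | 0 => μ
  | t + 1 => fun s' => ∑ s, stateDist Ppi μ t s * Ppi s s'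

/-- γ-discounted (1-γ)-normalized state occupancy measure. -/
noncomputable def occupancy {S : Type*} [Fintype S]
    (Ppi : S → S → ℝ) (μ : S → ℝ) (γ : ℝ) (s : S) : ℝ :=
  (1 - γ) * ∑' t : ℕ, γ ^ t * stateDist Ppi μ t s

/-- Transition kernel over states induced by policy π. -/
noncomputable def inducedKernel {S A : Type*} [Fintype A]
    (P : S → A → S → ℝ) (π : S → A → ℝ) : S → S → ℝ :=
  fun s s' => ∑ a, π s a * P s a s'

lemma stateDist_nonneg {S : Type*} [Fintype S] (K : S → S → ℝ) (μ : S → ℝ)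
    (hK0 : ∀ s s', 0 ≤ K s s') (hμ0 : ∀ s, 0 ≤ μ s) :
    ∀ t s, 0 ≤ stateDist K μ t s := by
  intro t
  induction t with
  | zero => exact hμ0
  | succ t ih =>
    intro s'
    exact Finset.sum_nonneg fun s _ => mul_nonneg (ih s) (hK0 s s')

lemma stateDist_sum_one {S : Type*} [Fintype S] (K : S → S → ℝ) (μ : S → ℝ)
    (hK1 : ∀ s, ∑ s', K s s' = 1) (hμ1 : ∑ s, μ s = 1) :
    ∀ t, ∑ s, stateDist K μ t s = 1 := by
  intro t
  induction t with
  | zero => exact hμ1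
  | succ t ih =>
    show (∑ s', ∑ s, stateDist K μ t s * K s s') = 1
    rw [Finset.sum_comm]
    calc (∑ s, ∑ s', stateDist K μ t s * K s s')
        = ∑ s, stateDist K μ t s * ∑ s', K s s' := by
          simp [Finset.mul_sum]
      _ = 1 := by simp only [hK1, mul_one]; exact ih

lemma summable_geom_mul {γ : ℝ} (hγ0 : 0 ≤ γ) (hγ1 : γ < 1) (h : ℕ → ℝ) (C : ℝ)
    (hC : ∀ t, |h t| ≤ C) : Summable fun t => γ ^ t * h t := by
  apply Summable.of_norm_bounded (g := fun t => C * γ ^ t)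
    ((summable_geometric_of_lt_one hγ0 hγ1).mul_left C)
  intro t
  rw [Real.norm_eq_abs, abs_mul, abs_pow, abs_of_nonneg hγ0, mul_comm]
  exact mul_le_mul_of_nonneg_right (hC t) (pow_nonneg hγ0 t)

lemma tsum_telescope_of_tendsto {c : ℕ → ℝ} (hs : Summable fun t => c t - c (t + 1))
    (h0 : Filter.Tendsto c Filter.atTop (nhds 0)) :
    ∑' t, (c t - c (t + 1)) = c 0 := by
  have h : Filter.Tendsto (fun n => ∑ i ∈ Finset.range n, (c i - c (i + 1)))
      Filter.atTop (nhds (c 0)) := by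
    simp only [Finset.sum_range_sub']
    simpa using Filter.Tendsto.const_sub (c 0) h0
  exact (hs.hasSum_iff_tendsto_nat.mpr h).tsum_eq

/-- Key lemma: occupancy-weighted Bellman residual equals normalized value difference. -/
lemma occupancy_residual {S : Type*} [Fintype S] (K : S → S → ℝ) (μ : S → ℝ) (γ : ℝ)
    (hγ0 : 0 ≤ γ) (hγ1 : γ < 1)
    (hK0 : ∀ s s', 0 ≤ K s s') (hK1 : ∀ s, ∑ s', K s s' = 1)
    (hμ0 : ∀ s, 0 ≤ μ s) (hμ1 : ∑ s, μ s = 1)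
    (r Vr W : S → ℝ)
    (hVr : ∀ s, Vr s = r s + γ * ∑ s', K s s' * Vr s') :
    ∑ s, occupancy K μ γ s * (r s + γ * (∑ s', K s s' * W s') - W s)
      = (1 - γ) * ((∑ s, μ s * Vr s) - ∑ s, μ s * W s) := by
  set ν : ℕ → S → ℝ := stateDist K μ with hν
  set g : S → ℝ := fun s => r s + γ * (∑ s', K s s' * W s') - W s with hg
  have hν0 := stateDist_nonneg K μ hK0 hμ0
  have hν1 := stateDist_sum_one K μ hK1 hμ1
  have hνle : ∀ t s, ν t s ≤ 1 := by
    intro t s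
    calc ν t s ≤ ∑ s', ν t s' :=
          Finset.single_le_sum (fun s' _ => hν0 t s') (Finset.mem_univ s)
      _ = 1 := hν1 t
  have habs : ∀ (t : ℕ) (x : S → ℝ), |∑ s, ν t s * x s| ≤ ∑ s, |x s| := by
    intro t x
    calc |∑ s, ν t s * x s| ≤ ∑ s, |ν t s * x s| := Finset.abs_sum_le_sum_abs _ _
      _ ≤ ∑ s, |x s| := by
          apply Finset.sum_le_sum
          intro s _
          rw [abs_mul, abs_of_nonneg (hν0 t s)]
          exact mul_le_of_le_one_left (abs_nonneg _) (hνle t s)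
  have hstep : ∀ (t : ℕ) (x : S → ℝ),
      ∑ s, ν t s * ∑ s', K s s' * x s' = ∑ s', ν (t + 1) s' * x s' := by
    intro t x
    have : ∀ s', ν (t + 1) s' = ∑ s, ν t s * K s s' := fun s' => rfl
    simp only [this, Finset.mul_sum, Finset.sum_mul]
    rw [Finset.sum_comm]
    apply Finset.sum_congr rfl
    intro s' _
    apply Finset.sum_congr rfl
    intro s _
    ring
  set Af : ℕ → ℝ := fun t => ∑ s, ν t s * r s with hAf
  set Bf : ℕ → ℝ := fun t => ∑ s, ν t s * W s with hBf
  set Cf : ℕ → ℝ := fun t => ∑ s, ν t s * Vr s with hCf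
  have hf : ∀ t, ∑ s, ν t s * g s = Af t + γ * Bf (t + 1) - Bf t := by
    intro t
    have : ∀ s, ν t s * g s
        = ν t s * r s + γ * (ν t s * ∑ s', K s s' * W s') - ν t s * W s := by
      intro s; simp only [hg]; ring
    rw [Finset.sum_congr rfl fun s _ => this s]
    rw [Finset.sum_sub_distrib, Finset.sum_add_distrib, ← Finset.mul_sum, hstep t W]
  have hA : ∀ t, Af t = Cf t - γ * Cf (t + 1) := by
    intro t
    have : ∀ s, ν t s * r s = ν t s * Vr s - γ * (ν t s * ∑ s', K s s' * Vr s') := by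
      intro s
      have hr : r s = Vr s - γ * ∑ s', K s s' * Vr s' := by linarith [hVr s]
      rw [hr]; ring
    simp only [hAf]
    rw [Finset.sum_congr rfl fun s _ => this s]
    rw [Finset.sum_sub_distrib, ← Finset.mul_sum, hstep t Vr]
  -- summability facts
  have hsumC : Summable fun t => γ ^ t * Cf t - γ ^ (t + 1) * Cf (t + 1) := by
    have : (fun t => γ ^ t * Cf t - γ ^ (t + 1) * Cf (t + 1))
        = fun t => γ ^ t * Af t := by
      funext t; rw [hA t]; ring
    rw [this]
    exact summable_geom_mul hγ0 hγ1 Af (∑ s, |r s|) fun t => habs t r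
  have hsumB : Summable fun t => γ ^ t * Bf t - γ ^ (t + 1) * Bf (t + 1) := by
    have heq : (fun t => γ ^ t * Bf t - γ ^ (t + 1) * Bf (t + 1))
        = fun t => γ ^ t * (Bf t - γ * Bf (t + 1)) := by
      funext t; ring
    rw [heq]
    apply summable_geom_mul hγ0 hγ1 _ ((1 + γ) * ∑ s, |W s|)
    intro t
    calc |Bf t - γ * Bf (t + 1)| ≤ |Bf t| + |γ * Bf (t + 1)| := abs_sub _ _
      _ ≤ (∑ s, |W s|) + γ * ∑ s, |W s| := by
          rw [abs_mul, abs_of_nonneg hγ0]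
          have h1 := habs t W
          have h2 := habs (t + 1) W
          have hWnn : (0:ℝ) ≤ ∑ s, |W s| := Finset.sum_nonneg fun s _ => abs_nonneg _
          nlinarith
      _ = (1 + γ) * ∑ s, |W s| := by ring
  -- tendsto facts
  have hpow : Filter.Tendsto (fun t : ℕ => γ ^ t) Filter.atTop (nhds 0) :=
    tendsto_pow_atTop_nhds_zero_of_lt_one hγ0 hγ1
  have htendC : Filter.Tendsto (fun t => γ ^ t * Cf t) Filter.atTop (nhds 0) := by
    apply squeeze_zero_norm (a := fun t => (∑ s, |Vr s|) * γ ^ t) ?_ ?_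
    · intro t
      rw [Real.norm_eq_abs, abs_mul, abs_pow, abs_of_nonneg hγ0, mul_comm]
      exact mul_le_mul_of_nonneg_right (habs t Vr) (pow_nonneg hγ0 t)
    · simpa using hpow.const_mul (∑ s, |Vr s|)
  have htendB : Filter.Tendsto (fun t => γ ^ t * Bf t) Filter.atTop (nhds 0) := by
    apply squeeze_zero_norm (a := fun t => (∑ s, |W s|) * γ ^ t) ?_ ?_
    · intro t
      rw [Real.norm_eq_abs, abs_mul, abs_pow, abs_of_nonneg hγ0, mul_comm]
      exact mul_le_mul_of_nonneg_right (habs t W) (pow_nonneg hγ0 t)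
    · simpa using hpow.const_mul (∑ s, |W s|)
  -- per-state summability
  have hsums : ∀ s : S, Summable fun t => γ ^ t * ν t s * g s := by
    intro s
    have : (fun t => γ ^ t * ν t s * g s) = fun t => γ ^ t * (ν t s * g s) := by
      funext t; ring
    rw [this]
    apply summable_geom_mul hγ0 hγ1 _ |g s|
    intro t
    rw [abs_mul, abs_of_nonneg (hν0 t s)]
    exact mul_le_of_le_one_left (abs_nonneg _) (hνle t s)
  -- main chain
  have step1 : ∑ s, occupancy K μ γ s * g s
      = (1 - γ) * ∑ s, ∑' t, γ ^ t * ν t s * g s := by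
    rw [Finset.mul_sum]
    apply Finset.sum_congr rfl
    intro s _
    show (1 - γ) * (∑' t, γ ^ t * ν t s) * g s = (1 - γ) * ∑' t, γ ^ t * ν t s * g s
    rw [mul_assoc, ← tsum_mul_right]
  have step2 : ∑ s, ∑' t, γ ^ t * ν t s * g s
      = ∑' t, γ ^ t * (∑ s, ν t s * g s) := by
    rw [← Summable.tsum_finsetSum fun s _ => hsums s]
    apply tsum_congr
    intro t
    rw [Finset.mul_sum]
    apply Finset.sum_congr rfl
    intro s _
    ring
  have step3 : ∑' t, γ ^ t * (∑ s, ν t s * g s) = Cf 0 - Bf 0 := by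
    have hterm : ∀ t, γ ^ t * (∑ s, ν t s * g s)
        = (γ ^ t * Cf t - γ ^ (t + 1) * Cf (t + 1))
          - (γ ^ t * Bf t - γ ^ (t + 1) * Bf (t + 1)) := by
      intro t
      rw [hf t, hA t]
      ring
    rw [tsum_congr hterm, Summable.tsum_sub hsumC hsumB]
    rw [tsum_telescope_of_tendsto hsumC htendC, tsum_telescope_of_tendsto hsumB htendB]
    simp
  have hC0 : Cf 0 = ∑ s, μ s * Vr s := rfl
  have hB0 : Bf 0 = ∑ s, μ s * W s := rfl
  rw [show (∑ s, occupancy K μ γ s * (r s + γ * (∑ s', K s s' * W s') - W s))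
      = ∑ s, occupancy K μ γ s * g s from rfl, step1, step2, step3, hC0, hB0]

section Main

variable {S A : Type*} [Fintype S] [Fintype A]

lemma inducedKernel_swap (P : S → A → S → ℝ) (ρ : S → A → ℝ) (s : S) (x : S → ℝ) :
    ∑ a, ρ s a * ∑ s', P s a s' * x s' = ∑ s', inducedKernel P ρ s s' * x s' := by
  simp only [inducedKernel, Finset.mul_sum, Finset.sum_mul]
  rw [Finset.sum_comm]
  apply Finset.sum_congr rfl
  intro s' _
  apply Finset.sum_congr rfl
  intro a _
  ring

lemma inducedKernel_sum_one (P : S → A → S → ℝ) (ρ : S → A → ℝ)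
    (hP1 : ∀ s a, ∑ s', P s a s' = 1) (hρ1 : ∀ s, ∑ a, ρ s a = 1) (s : S) :
    ∑ s', inducedKernel P ρ s s' = 1 := by
  simp only [inducedKernel]
  rw [Finset.sum_comm]
  calc (∑ a, ∑ s', ρ s a * P s a s') = ∑ a, ρ s a * ∑ s', P s a s' := by
        simp [Finset.mul_sum]
    _ = 1 := by simp only [hP1, mul_one]; exact hρ1 s

end Main

/-- (1-γ)(J_μ^{π'} − J_μ^{π}) = ∑_s d_μ^{π'}(s) ∑_a π'(a|s) A^π(s,a)
and also equals −∑_s d_μ^{π}(s) ∑_a π(a|s) A^{π'}(s,a). -/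
theorem value_difference_via_occupancy
    {S A : Type*} [Fintype S] [Fintype A]
    (P : S → A → S → ℝ) (R : S → A → ℝ) (γ : ℝ)
    (hγ0 : 0 ≤ γ) (hγ1 : γ < 1)
    (hP0 : ∀ s a s', 0 ≤ P s a s') (hP1 : ∀ s a, ∑ s', P s a s' = 1)
    (π π' : S → A → ℝ)
    (hπ0 : ∀ s a, 0 ≤ π s a) (hπ1 : ∀ s, ∑ a, π s a = 1)
    (hπ'0 : ∀ s a, 0 ≤ π' s a) (hπ'1 : ∀ s, ∑ a, π' s a = 1)
    (μ : S → ℝ) (hμ0 : ∀ s, 0 ≤ μ s) (hμ1 : ∑ s, μ s = 1)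
    (V V' : S → ℝ)
    (hV : ∀ s, V s = ∑ a, π s a * (R s a + γ * ∑ s', P s a s' * V s'))
    (hV' : ∀ s, V' s = ∑ a, π' s a * (R s a + γ * ∑ s', P s a s' * V' s'))
    (Q Q' : S → A → ℝ)
    (hQ : ∀ s a, Q s a = R s a + γ * ∑ s', P s a s' * V s')
    (hQ' : ∀ s a, Q' s a = R s a + γ * ∑ s', P s a s' * V' s')
    (Adv Adv' : S → A → ℝ)
    (hAdv : ∀ s a, Adv s a = Q s a - V s)
    (hAdv' : ∀ s a, Adv' s a = Q' s a - V' s) :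
    (1 - γ) * ((∑ s, μ s * V' s) - ∑ s, μ s * V s) =
        ∑ s, occupancy (inducedKernel P π') μ γ s * ∑ a, π' s a * Adv s a ∧
    (1 - γ) * ((∑ s, μ s * V' s) - ∑ s, μ s * V s) =
        -∑ s, occupancy (inducedKernel P π) μ γ s * ∑ a, π s a * Adv' s a := by
  have hbellman : ∀ (ρ : S → A → ℝ) (hρ1 : ∀ s, ∑ a, ρ s a = 1) (x : S → A → ℝ)
      (W : S → ℝ) (hx : ∀ s a, x s a = R s a + γ * ∑ s', P s a s' * W s') (s : S),
      ∑ a, ρ s a * x s a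
        = (∑ a, ρ s a * R s a) + γ * ∑ s', inducedKernel P ρ s s' * W s' := by
    intro ρ hρ1 x W hx s
    simp only [hx]
    rw [← inducedKernel_swap P ρ s W]
    rw [Finset.mul_sum, ← Finset.sum_add_distrib]
    apply Finset.sum_congr rfl
    intro a _
    ring
  -- advantage identity for (π', Adv)
  have hAdvId : ∀ (ρ : S → A → ℝ) (hρ1 : ∀ s, ∑ a, ρ s a = 1) (Adw : S → A → ℝ)
      (Qw W : S → A → ℝ → ℝ), True := fun _ _ _ _ _ => trivial
  have hK'0 : ∀ s s', 0 ≤ inducedKernel P π' s s' := fun s s' =>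
    Finset.sum_nonneg fun a _ => mul_nonneg (hπ'0 s a) (hP0 s a s')
  have hK0' : ∀ s s', 0 ≤ inducedKernel P π s s' := fun s s' =>
    Finset.sum_nonneg fun a _ => mul_nonneg (hπ0 s a) (hP0 s a s')
  have hK'1 := inducedKernel_sum_one P π' hP1 hπ'1
  have hK1 := inducedKernel_sum_one P π hP1 hπ1
  -- Bellman equation of V' w.r.t. induced kernel of π'
  have hV'bell : ∀ s, V' s = (∑ a, π' s a * R s a)
      + γ * ∑ s', inducedKernel P π' s s' * V' s' := by
    intro s
    rw [hV' s, hbellman π' hπ'1 _ V' (fun s a => rfl) s]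
  have hVbell : ∀ s, V s = (∑ a, π s a * R s a)
      + γ * ∑ s', inducedKernel P π s s' * V s' := by
    intro s
    rw [hV s, hbellman π hπ1 _ V (fun s a => rfl) s]
  -- advantage sums
  have hAdvSum : ∀ s, ∑ a, π' s a * Adv s a
      = (∑ a, π' s a * R s a) + γ * (∑ s', inducedKernel P π' s s' * V s') - V s := by
    intro s
    have : ∀ a, π' s a * Adv s a = π' s a * Q s a - π' s a * V s := by
      intro a; rw [hAdv]; ring
    rw [Finset.sum_congr rfl fun a _ => this a, Finset.sum_sub_distrib,
      ← Finset.sum_mul, hπ'1 s, one_mul, hbellman π' hπ'1 Q V hQ s]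
  have hAdvSum' : ∀ s, ∑ a, π s a * Adv' s a
      = (∑ a, π s a * R s a) + γ * (∑ s', inducedKernel P π s s' * V' s') - V' s := by
    intro s
    have : ∀ a, π s a * Adv' s a = π s a * Q' s a - π s a * V' s := by
      intro a; rw [hAdv']; ring
    rw [Finset.sum_congr rfl fun a _ => this a, Finset.sum_sub_distrib,
      ← Finset.sum_mul, hπ1 s, one_mul, hbellman π hπ1 Q' V' hQ' s]
  constructor
  · have hrw : (∑ s, occupancy (inducedKernel P π') μ γ s * ∑ a, π' s a * Adv s a)
        = ∑ s, occupancy (inducedKernel P π') μ γ s *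
            ((∑ a, π' s a * R s a) + γ * (∑ s', inducedKernel P π' s s' * V s') - V s) :=
      Finset.sum_congr rfl fun s _ => by rw [hAdvSum s]
    rw [hrw, occupancy_residual (inducedKernel P π') μ γ hγ0 hγ1 hK'0 hK'1 hμ0 hμ1
      (fun s => ∑ a, π' s a * R s a) V' V hV'bell]
  · have hrw : (∑ s, occupancy (inducedKernel P π) μ γ s * ∑ a, π s a * Adv' s a)
        = ∑ s, occupancy (inducedKernel P π) μ γ s *
            ((∑ a, π s a * R s a) + γ * (∑ s', inducedKernel P π s s' * V' s') - V' s) :=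
      Finset.sum_congr rfl fun s _ => by rw [hAdvSum' s]
    rw [hrw, occupancy_residual (inducedKernel P π) μ γ hγ0 hγ1 hK0' hK1 hμ0 hμ1
      (fun s => ∑ a, π s a * R s a) V V' hVbell]
    ring
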